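/- Let K be a finite group of order l, n ≥ 2, and G = F_n ≀ K the wreath product, with Δ : G → ℤ defined by Δ((f_{k₁},…,f_{k_l})k) = Σ_{i=1}^l ql(f_{k_i}). Then for all g, h ∈ G the commutator [g,h] = g⁻¹h⁻¹gh satisfies |Δ([g,h])| ≤ 15l. -/

import Mathlib

/-- `tr m` is `-1, 0, 1` according as `m ≡ -1, 0, 1 (mod 3)`. -/
def tr (m : ℤ) : ℤ := if m % 3 = 0 then 0 else if m % 3 = 1 then 1 else -1

/-- `ql w` is the sum of `tr` of the exponents of the syllables in the
reduced syllable form of `w`: the reduced word `w.toWord` is split into maximal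
runs (syllables) of letters with the same generator, and each syllable
`x_i ^ α` contributes `tr α`. -/
def ql {n : ℕ} (w : FreeGroup (Fin n)) : ℤ :=
  ((w.toWord.splitBy (fun p q => p.1 == q.1)).map
    (fun s => tr ((s.map (fun p => if p.2 then (1 : ℤ) else -1)).sum))).sum

/-- The permutation action of `K` on the base group `K → H` of the wreath product
`H ≀ K`, by left translation on the index set: `(k • f) k' = f (k⁻¹ * k')`. -/
def wreathAction (H K : Type*) [Group H] [Group K] : K →* MulAut (K → H) where
  toFun k :=
    { toFun := fun f x => f (k⁻¹ * x)
      invFun := fun f x => f (k * x)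
      left_inv := fun f => by funext x; simp [← mul_assoc]
      right_inv := fun f => by funext x; simp [← mul_assoc]
      map_mul' := fun f g => rfl }
  map_one' := by
    ext f x
    simp
  map_mul' := fun a b => by
    ext f x
    simp [mul_assoc]

/-- The wreath product `H ≀ K = (∏_{k ∈ K} H) ⋊ K`. -/
abbrev WreathProduct (H K : Type*) [Group H] [Group K] :=
  SemidirectProduct (K → H) K (wreathAction H K)

/-- The quasi-homomorphism `Δ : Fₙ ≀ K → ℤ`, `Δ((f_{k₁}, …, f_{k_l})k) = Σᵢ ql(f_{kᵢ})`. -/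
def Δ {n : ℕ} {K : Type*} [Group K] [Fintype K]
    (g : WreathProduct (FreeGroup (Fin n)) K) : ℤ :=
  ∑ k : K, ql (g.left k)

namespace WP
open FreeGroup

open List

variable {β : Type*} (r : β → β → Bool)

theorem loop_eq_append (l : List β) (a : β) (g : List β)
    (gs : List (List β)) : splitBy.loop r l a g gs = gs.reverse ++ splitBy.loop r l a g [] := by
  induction l generalizing a g gs with
  | nil => simp [splitBy.loop]
  | cons b l IH =>
    simp only [splitBy.loop]
    cases r a b
    · dsimp only
      rw [IH b [] ((a :: g).reverse :: gs), IH b [] [(a :: g).reverse]]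
      simp
    · dsimp only
      exact IH b (a :: g) gs

/-- boundary relation between chunks -/
def Bd (s t : List β) : Prop := ∀ x ∈ s.getLast?, ∀ y ∈ t.head?, r x y = false

theorem splitBy_cons_run : ∀ (s : List β) (t : List β), s ≠ [] →
    s.IsChain (r · ·) → Bd r s t →
    (s ++ t).splitBy r = s :: t.splitBy r := by
  suffices H : ∀ (s' t : List β) (a : β) (g : List β), (a :: s').IsChain (r · ·) →
      Bd r (a :: s') t →
      splitBy.loop r (s' ++ t) a g [] = (g.reverse ++ a :: s') :: t.splitBy r by
    rintro (_ | ⟨a, s'⟩) t hs hchain hbd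
    · exact absurd rfl hs
    · have := H s' t a [] hchain hbd
      cases t with
      | nil => simpa [splitBy] using this
      | cons b t' => simpa [splitBy] using this
  intro s' t a g hchain hbd
  induction s' generalizing a g with
  | nil =>
    cases t with
    | nil => simp [splitBy.loop]
    | cons b t' =>
      have hb : r a b = false := hbd a rfl b rfl
      simp only [nil_append, splitBy.loop, hb]
      rw [loop_eq_append]
      simp [splitBy]
  | cons c s'' IH =>
    have hac : r a c = true := (isChain_cons_cons.mp hchain).1
    simp only [cons_append, splitBy.loop, hac]
    have := IH c (a :: g) (isChain_cons_cons.mp hchain).2 ?_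
    · simpa using this
    · intro x hx y hy
      exact hbd x (by rwa [getLast?_cons_cons]) y hy

theorem splitBy_flatten_eq : ∀ (Ls : List (List β)), (∀ s ∈ Ls, s ≠ []) →
    (∀ s ∈ Ls, s.IsChain (r · ·)) → Ls.IsChain (Bd r) →
    Ls.flatten.splitBy r = Ls := by
  intro Ls
  induction Ls with
  | nil => simp
  | cons s Ls IH =>
    intro hne hchain hbd
    rw [flatten_cons, splitBy_cons_run r s Ls.flatten (hne s (by simp))
      (hchain s (by simp))]
    · rw [IH (fun t ht => hne t (by simp [ht])) (fun t ht => hchain t (by simp [ht]))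
        hbd.tail]
    · -- boundary between s and Ls.flatten
      intro x hx y hy
      cases Ls with
      | nil => simp at hy
      | cons u Ls' =>
        have hu : u ≠ [] := hne u (by simp)
        have hbd' : Bd r s u := (isChain_cons_cons.mp hbd).1
        apply hbd' x hx y
        rw [flatten_cons] at hy
        cases u with
        | nil => exact absurd rfl hu
        | cons z u' => simpa using hy



open List FreeGroup

theorem tr_abs_le (m : ℤ) : |tr m| ≤ 1 := by
  unfold tr; split_ifs <;> simp
theorem tr_neg (m : ℤ) : tr (-m) = -tr m := by
  unfold tr; split_ifs <;> omega
theorem tr_add_bound (x y : ℤ) : |tr (x + y) - tr x - tr y| ≤ 3 := by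
  have h1 := tr_abs_le (x+y); have h2 := tr_abs_le x; have h3 := tr_abs_le y
  rw [abs_le] at *; omega

variable {α : Type*} [DecidableEq α]

/-- same-generator relation -/
abbrev R : α × Bool → α × Bool → Bool := fun p q => p.1 == q.1

/-- weight of a letter -/
def wt (p : α × Bool) : ℤ := if p.2 then 1 else -1

/-- sum of weights of a chunk -/
def cs (s : List (α × Bool)) : ℤ := (s.map wt).sum

/-- word-level ql -/
def qlw (w : List (α × Bool)) : ℤ := ((w.splitBy R).map (fun s => tr (cs s))).sum

/-- sum of first syllable -/
def FS (w : List (α × Bool)) : ℤ := cs (((w.splitBy R).head?).getD [])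
/-- sum of last syllable -/
def LS (w : List (α × Bool)) : ℤ := cs (((w.splitBy R).getLast?).getD [])

@[simp] theorem qlw_nil : qlw ([] : List (α × Bool)) = 0 := rfl

theorem cs_append (s t : List (α × Bool)) : cs (s ++ t) = cs s + cs t := by
  simp [cs]

theorem qlw_append {a b : List (α × Bool)} {x y : α × Bool}
    (hx : a.getLast? = some x) (hy : b.head? = some y) :
    qlw (a ++ b) = if x.1 = y.1
      then qlw a + qlw b + (tr (LS a + FS b) - tr (LS a) - tr (FS b))
      else qlw a + qlw b := by
  have ha : a ≠ [] := by rintro rfl; simp at hx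
  have hb : b ≠ [] := by rintro rfl; simp at hy
  -- structure of the two splitBys
  have hAne : ∀ s ∈ a.splitBy R, s ≠ [] := fun s hs => ne_nil_of_mem_splitBy (r := R) (l := a) hs
  have hAch := fun s (hs : s ∈ a.splitBy R) => isChain_of_mem_splitBy hs
  have hAbd : (a.splitBy R).IsChain (Bd R) := by
    refine (isChain_getLast_head_splitBy R a).imp ?_
    rintro s t ⟨hs, ht, h⟩ x' hx' y' hy'
    rw [getLast?_eq_getLast hs] at hx'
    rw [head?_eq_head ht] at hy'
    obtain rfl : x' = s.getLast hs := by injection hx' with hh; exact hh.symm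
    obtain rfl : y' = t.head ht := by injection hy' with hh; exact hh.symm
    exact h
  have hBne : ∀ s ∈ b.splitBy R, s ≠ [] := fun s hs => ne_nil_of_mem_splitBy (r := R) (l := b) hs
  have hBch := fun s (hs : s ∈ b.splitBy R) => isChain_of_mem_splitBy hs
  have hBbd : (b.splitBy R).IsChain (Bd R) := by
    refine (isChain_getLast_head_splitBy R b).imp ?_
    rintro s t ⟨hs, ht, h⟩ x' hx' y' hy'
    rw [getLast?_eq_getLast hs] at hx'
    rw [head?_eq_head ht] at hy'
    obtain rfl : x' = s.getLast hs := by injection hx' with hh; exact hh.symm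
    obtain rfl : y' = t.head ht := by injection hy' with hh; exact hh.symm
    exact h
  have hAflat : (a.splitBy R).flatten = a := flatten_splitBy R a
  have hBflat : (b.splitBy R).flatten = b := flatten_splitBy R b
  -- decompose
  obtain ⟨as, al, hA⟩ : ∃ as al, a.splitBy R = as ++ [al] := by
    rcases (a.splitBy R).eq_nil_or_concat with h | ⟨as, al, h⟩
    · exact absurd (by rw [← hAflat, h]; rfl) ha
    · exact ⟨as, al, by rw [h, concat_eq_append]⟩
  obtain ⟨bh, bs, hB⟩ : ∃ bh bs, b.splitBy R = bh :: bs := by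
    cases hBs : b.splitBy R with
    | nil => exact absurd (by rw [← hBflat, hBs]; rfl) hb
    | cons bh bs => exact ⟨bh, bs, rfl⟩
  have hal : al ≠ [] := hAne al (by rw [hA]; simp)
  have hbh : bh ≠ [] := hBne bh (by rw [hB]; simp)
  -- last of a is last of al, head of b is head of bh
  have hax : al.getLast? = some x := by
    rw [hA] at hAflat
    rw [← hx, ← hAflat, flatten_append, flatten_cons, flatten_nil, append_nil,
      getLast?_append, getLast?_eq_getLast hal, Option.some_or]
  have hby : bh.head? = some y := by
    rw [hB] at hBflat
    rw [← hy, ← hBflat, flatten_cons]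
    cases bh with
    | nil => exact absurd rfl hbh
    | cons z u => rfl
  have hLSa : LS a = cs al := by rw [LS, hA, getLast?_concat]; rfl
  have hFSb : FS b = cs bh := by rw [FS, hB]; rfl
  by_cases hkey : x.1 = y.1
  · -- merge case
    rw [if_pos hkey]
    have hsplit : (a ++ b).splitBy R = as ++ ((al ++ bh) :: bs) := by
      have := splitBy_flatten_eq R (as ++ ((al ++ bh) :: bs)) ?_ ?_ ?_
      · rw [← this]
        congr 1
        rw [flatten_append, flatten_cons, ← hAflat, ← hBflat, hA, hB,
          flatten_append, flatten_cons, flatten_nil, flatten_cons]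
        simp [append_assoc]
      · intro s hs
        rcases mem_append.mp hs with h | h
        · exact hAne s (by rw [hA]; exact mem_append.mpr (Or.inl h))
        · rcases mem_cons.mp h with rfl | h
          · simp [hal]
          · exact hBne s (by rw [hB]; exact mem_cons.mpr (Or.inr h))
      · intro s hs
        rcases mem_append.mp hs with h | h
        · exact hAch s (by rw [hA]; exact mem_append.mpr (Or.inl h))
        · rcases mem_cons.mp h with rfl | h
          · rw [isChain_append]
            refine ⟨hAch al (by rw [hA]; simp), hBch bh (by rw [hB]; simp), ?_⟩
            intro x' hx' y' hy'
            rw [hax] at hx'; rw [hby] at hy'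
            obtain rfl : x' = x := by injection hx' with hh; exact hh.symm
            obtain rfl : y' = y := by injection hy' with hh; exact hh.symm
            simpa using hkey
          · exact hBch s (by rw [hB]; exact mem_cons.mpr (Or.inr h))
      · rw [isChain_append]
        refine ⟨?_, ?_, ?_⟩
        · rw [hA] at hAbd
          exact hAbd.prefix ⟨[al], rfl⟩
        · rw [isChain_cons]
          constructor
          · intro t ht
            rw [hB] at hBbd
            have h2 := (isChain_cons.mp hBbd).1 t ht
            intro x' hx' y' hy'
            rw [getLast?_append, getLast?_eq_getLast hbh, Option.some_or] at hx'
            exact h2 x' (by rw [getLast?_eq_getLast hbh]; exact hx') y' hy'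
          · rw [hB] at hBbd
            exact hBbd.tail
        · intro s hs t ht
          obtain rfl : t = al ++ bh := by
            simp only [head?_cons, Option.mem_def, Option.some.injEq] at ht
            exact ht.symm
          rw [hA] at hAbd
          rw [isChain_append] at hAbd
          have := hAbd.2.2 s hs al rfl
          intro x' hx' y' hy'
          apply this x' hx' y'
          cases al with
          | nil => exact absurd rfl hal
          | cons z u => simpa using hy'
    rw [qlw, hsplit, map_append, sum_append, map_cons, sum_cons, qlw, qlw, hA, hB,
      map_append, sum_append, map_cons, sum_cons, hLSa, hFSb, cs_append]
    simp only [map_cons, map_nil, sum_cons, sum_nil]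
    ring
  · -- no-merge case
    rw [if_neg hkey]
    have hsplit : (a ++ b).splitBy R = (as ++ [al]) ++ (bh :: bs) := by
      have := splitBy_flatten_eq R ((as ++ [al]) ++ (bh :: bs)) ?_ ?_ ?_
      · rw [← this, flatten_append, ← hAflat, ← hBflat, hA, hB]
      · intro s hs
        rcases mem_append.mp hs with h | h
        · exact hAne s (by rw [hA]; exact h)
        · exact hBne s (by rw [hB]; exact h)
      · intro s hs
        rcases mem_append.mp hs with h | h
        · exact hAch s (by rw [hA]; exact h)
        · exact hBch s (by rw [hB]; exact h)
      · rw [isChain_append]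
        refine ⟨by rw [← hA]; exact hAbd, by rw [← hB]; exact hBbd, ?_⟩
        intro s hs t ht
        obtain rfl : s = al := by
          rw [getLast?_concat] at hs
          injection hs with hh; exact hh.symm
        obtain rfl : t = bh := by
          simp only [head?_cons, Option.mem_def, Option.some.injEq] at ht
          exact ht.symm
        intro x' hx' y' hy'
        rw [hax] at hx'; rw [hby] at hy'
        obtain rfl : x' = x := by injection hx' with hh; exact hh.symm
        obtain rfl : y' = y := by injection hy' with hh; exact hh.symm
        simpa using hkey
    rw [qlw, hsplit, map_append, sum_append, qlw, qlw, hA, hB]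
end WP
section Part3
namespace WP
open List FreeGroup

variable {α : Type*} [DecidableEq α]

/-- letter inverse -/
def inv1 (p : α × Bool) : α × Bool := (p.1, !p.2)

theorem invRev_eq (w : List (α × Bool)) : invRev w = (w.map inv1).reverse := rfl

theorem invRev_ne_nil {t : List (α × Bool)} (h : t ≠ []) : invRev t ≠ [] := by
  simpa [invRev_eq] using h

theorem cs_invRev (s : List (α × Bool)) : cs (invRev s) = -cs s := by
  rw [cs, invRev_eq, map_reverse, sum_reverse, map_map, cs]
  induction s with
  | nil => simp
  | cons p s IH =>
    simp only [map_cons, sum_cons, IH]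
    have : wt (inv1 p) = -wt p := by
      rcases p with ⟨z, (_|_)⟩ <;> simp [wt, inv1]
    rw [Function.comp_apply] at *
    simp only [Function.comp, this]
    ring

theorem chain'_R_invRev {t : List (α × Bool)} (h : t.IsChain (R · ·)) :
    (invRev t).IsChain (R · ·) := by
  rw [invRev_eq, List.isChain_reverse, isChain_map]
  refine h.imp ?_
  intro p q hpq
  simp only [Function.flip_def, inv1]
  simp only [R, beq_iff_eq] at hpq ⊢
  exact hpq.symm

theorem head?_invRev (c : List (α × Bool)) : (invRev c).head? = c.getLast?.map inv1 := by
  rw [invRev_eq, head?_reverse, getLast?_map]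

theorem getLast?_invRev (c : List (α × Bool)) : (invRev c).getLast? = c.head?.map inv1 := by
  rw [invRev_eq, getLast?_reverse, head?_map]

theorem Bd_invRev {s t : List (α × Bool)} (h : Bd R s t) : Bd R (invRev t) (invRev s) := by
  intro x hx y hy
  rw [Option.mem_def, getLast?_invRev] at hx
  rw [Option.mem_def, head?_invRev] at hy
  obtain ⟨x0, hx0, rfl⟩ := Option.map_eq_some_iff.mp hx
  obtain ⟨y0, hy0, rfl⟩ := Option.map_eq_some_iff.mp hy
  have := h y0 hy0 x0 hx0
  simp only [R, beq_eq_false_iff_ne, ne_eq, inv1] at this ⊢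
  exact fun hc => this hc.symm

theorem flatten_invRev_chunks : ∀ (Ls : List (List (α × Bool))),
    ((Ls.map invRev).reverse).flatten = invRev Ls.flatten := by
  intro Ls
  induction Ls with
  | nil => simp [invRev_eq]
  | cons s Ls IH =>
    simp only [map_cons, reverse_cons, flatten_append, flatten_cons, IH, flatten_nil,
      append_nil]
    simp [invRev_eq, map_append, reverse_append]

theorem splitBy_invRev (c : List (α × Bool)) :
    (invRev c).splitBy R = ((c.splitBy R).map invRev).reverse := by
  conv_lhs => rw [← flatten_splitBy R c, ← flatten_invRev_chunks]
  apply splitBy_flatten_eq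
  · intro s hs
    rw [mem_reverse, mem_map] at hs
    obtain ⟨t, ht, rfl⟩ := hs
    exact invRev_ne_nil (ne_nil_of_mem_splitBy (r := R) ht)
  · intro s hs
    rw [mem_reverse, mem_map] at hs
    obtain ⟨t, ht, rfl⟩ := hs
    exact chain'_R_invRev (isChain_of_mem_splitBy ht)
  · rw [List.isChain_reverse, isChain_map]
    have hbd : (c.splitBy R).IsChain (Bd R) := by
      refine (isChain_getLast_head_splitBy R c).imp ?_
      rintro s t ⟨hs, ht, h⟩ x' hx' y' hy'
      rw [Option.mem_def, getLast?_eq_getLast hs] at hx'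
      rw [Option.mem_def, head?_eq_head ht] at hy'
      obtain rfl : x' = s.getLast hs := by injection hx' with hh; exact hh.symm
      obtain rfl : y' = t.head ht := by injection hy' with hh; exact hh.symm
      exact h
    refine hbd.imp ?_
    intro s t h
    exact Bd_invRev h

theorem sum_map_neg {X : Type*} (l : List X) (f : X → ℤ) :
    (l.map fun x => -f x).sum = -(l.map f).sum := by
  induction l with
  | nil => simp
  | cons x l IH => simp [IH]; ring

theorem qlw_invRev (c : List (α × Bool)) : qlw (invRev c) = -qlw c := by
  rw [qlw, splitBy_invRev, map_reverse, sum_reverse, map_map]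
  rw [qlw, ← sum_map_neg]
  congr 1
  refine map_congr_left ?_
  intro s _
  simp only [Function.comp_apply, cs_invRev, tr_neg]

theorem LS_invRev (c : List (α × Bool)) : LS (invRev c) = -FS c := by
  rw [LS, splitBy_invRev, getLast?_reverse, head?_map, FS]
  cases h : (c.splitBy R).head? with
  | none => simp [cs]
  | some s => simp [cs_invRev]

end WP
end Part3
section Part4
namespace WP
open List FreeGroup

variable {α : Type*} [DecidableEq α]

/-- a word is reduced -/
def Reduced (w : List (α × Bool)) : Prop :=
  w.IsChain (fun p q => ¬(p.1 = q.1 ∧ p.2 = !q.2))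

theorem reduced_reduce (L : List (α × Bool)) : Reduced (reduce L) := by
  induction L with
  | nil => exact isChain_nil
  | cons x L IH =>
    rw [reduce.cons]
    cases h : reduce L with
    | nil => simp [Reduced]
    | cons hd tl =>
      rw [h] at IH
      dsimp only
      by_cases hc : x.1 = hd.1 ∧ x.2 = !hd.2
      · rw [if_pos hc]
        exact IH.tail
      · rw [if_neg hc]
        exact isChain_cons_cons.mpr ⟨hc, IH⟩

theorem Reduced.reduce_eq {w : List (α × Bool)} (h : Reduced w) : reduce w = w := by
  induction w with
  | nil => rfl
  | cons x w IH =>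
    rw [reduce.cons, IH h.tail]
    cases w with
    | nil => rfl
    | cons q w' =>
      dsimp only
      rw [if_neg (isChain_cons_cons.mp h).1]

theorem reduced_toWord (w : FreeGroup α) : Reduced w.toWord := by
  rw [← reduce_toWord]; exact reduced_reduce _

theorem reduce_append_aux : ∀ (n : ℕ) (a b : List (α × Bool)), a.length ≤ n →
    Reduced a → Reduced b →
    ∃ p c q, a = p ++ c ∧ b = invRev c ++ q ∧ reduce (a ++ b) = p ++ q := by
  intro n
  induction n with
  | zero =>
    intro a b hlen _ hb
    obtain rfl : a = [] := by simpa using hlen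
    exact ⟨[], [], b, by simp, by simp [invRev], by simpa using hb.reduce_eq⟩
  | succ n IH =>
    intro a b hlen ha hb
    rcases a.eq_nil_or_concat with rfl | ⟨p', ℓ, rfl⟩
    · exact ⟨[], [], b, by simp, by simp [invRev], by simpa using hb.reduce_eq⟩
    rw [concat_eq_append] at *
    cases b with
    | nil =>
      exact ⟨p' ++ [ℓ], [], [], by simp, by simp [invRev], by
        simpa using ha.reduce_eq⟩
    | cons m b' =>
      by_cases hc : ℓ.1 = m.1 ∧ ℓ.2 = !m.2
      · have hm : m = (ℓ.1, !ℓ.2) := by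
          rcases hc with ⟨h1, h2⟩
          refine Prod.ext h1.symm ?_
          rw [h2]; simp
        have hstep : reduce ((p' ++ [ℓ]) ++ (m :: b')) = reduce (p' ++ b') := by
          apply FreeGroup.reduce.eq_of_red
          have : Red.Step (p' ++ (ℓ.1, ℓ.2) :: (ℓ.1, !ℓ.2) :: b') (p' ++ b') :=
            Red.Step.not
          apply Red.Step.to_red
          simpa [hm] using this
        have hp' : Reduced p' := ha.prefix ⟨[ℓ], rfl⟩
        have hb' : Reduced b' := hb.tail
        obtain ⟨p, c, q, h1, h2, h3⟩ := IH p' b' (by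
          have := hlen; simp at this; omega) hp' hb'
        refine ⟨p, c ++ [ℓ], q, by rw [h1]; simp, ?_, by rw [hstep, h3]⟩
        have hinv : invRev (c ++ [ℓ]) = (ℓ.1, !ℓ.2) :: invRev c := by
          simp [invRev_eq, inv1]
        rw [hinv, ← hm, h2]
        simp
      · refine ⟨p' ++ [ℓ], [], m :: b', by simp, by simp [invRev], ?_⟩
        have : Reduced ((p' ++ [ℓ]) ++ (m :: b')) := by
          rw [Reduced, isChain_append]
          refine ⟨ha, hb, ?_⟩
          intro x' hx' y' hy'
          rw [Option.mem_def, getLast?_concat] at hx'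
          obtain rfl : x' = ℓ := by injection hx' with hh; exact hh.symm
          obtain rfl : y' = m := by
            simp only [head?_cons, Option.mem_def, Option.some.injEq] at hy'
            exact hy'.symm
          exact hc
        rw [this.reduce_eq]

theorem reduce_append {a b : List (α × Bool)} (ha : Reduced a) (hb : Reduced b) :
    ∃ p c q, a = p ++ c ∧ b = invRev c ++ q ∧ reduce (a ++ b) = p ++ q :=
  reduce_append_aux a.length a b le_rfl ha hb

theorem qlw_append_bound (a b : List (α × Bool)) :
    |qlw (a ++ b) - qlw a - qlw b| ≤ 3 := by
  rcases eq_or_ne a [] with rfl | ha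
  · simp
  rcases eq_or_ne b [] with rfl | hb
  · simp
  obtain ⟨x, hx⟩ : ∃ x, a.getLast? = some x := ⟨_, getLast?_eq_getLast ha⟩
  obtain ⟨y, hy⟩ : ∃ y, b.head? = some y := ⟨_, head?_eq_head hb⟩
  rw [qlw_append hx hy]
  split_ifs
  · have := tr_add_bound (LS a) (FS b)
    rw [abs_le] at *
    constructor <;> linarith
  · simp

theorem qlw_defect {a b : List (α × Bool)} (ha : Reduced a) (hb : Reduced b) :
    |qlw (reduce (a ++ b)) - qlw a - qlw b| ≤ 3 := by
  obtain ⟨p, c, q, rfl, rfl, hr⟩ := reduce_append ha hb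
  rw [hr]
  rcases eq_or_ne c [] with rfl | hc
  · simpa [invRev] using qlw_append_bound p q
  rcases eq_or_ne p [] with rfl | hp
  · have h := qlw_append_bound (invRev c) q
    rw [qlw_invRev] at h
    simp only [nil_append]
    rw [abs_le] at *
    constructor <;> linarith
  rcases eq_or_ne q [] with rfl | hq
  · have h := qlw_append_bound p c
    have h2 : qlw (invRev c) = -qlw c := qlw_invRev c
    simp only [append_nil]
    rw [abs_le] at *
    constructor <;> linarith
  -- main case: p, c, q all nonempty
  obtain ⟨x, hx⟩ : ∃ x, p.getLast? = some x := ⟨_, getLast?_eq_getLast hp⟩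
  obtain ⟨y, hy⟩ : ∃ y, q.head? = some y := ⟨_, head?_eq_head hq⟩
  obtain ⟨z, hz⟩ : ∃ z, c.head? = some z := ⟨_, head?_eq_head hc⟩
  have hzinv : (invRev c).getLast? = some (inv1 z) := by
    rw [getLast?_invRev, hz]; rfl
  rw [qlw_append hx hy, qlw_append hx hz, qlw_append hzinv hy, qlw_invRev, LS_invRev]
  have hziv1 : (inv1 z).1 = z.1 := rfl
  rw [hziv1]
  by_cases hXZ : x.1 = z.1 <;> by_cases hZY : z.1 = y.1
  · rw [if_pos hXZ, if_pos hZY, if_pos (hXZ.trans hZY)]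
    have e : LS p + FS c + (-FS c + FS q) = LS p + FS q := by ring
    have h := tr_add_bound (LS p + FS c) (-FS c + FS q)
    rw [e] at h
    have h2 : tr (-FS c) = -tr (FS c) := tr_neg _
    rw [abs_le] at *
    constructor <;> linarith
  · rw [if_pos hXZ, if_neg hZY, if_neg (fun hXY => hZY (hXZ.symm.trans hXY))]
    have h := tr_add_bound (LS p) (FS c)
    rw [abs_le] at *
    constructor <;> linarith
  · rw [if_neg hXZ, if_pos hZY, if_neg (fun hXY => hXZ (hXY.trans hZY.symm))]
    have h := tr_add_bound (-FS c) (FS q)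
    have h2 : tr (-FS c) = -tr (FS c) := tr_neg _
    rw [abs_le] at *
    constructor <;> linarith
  · rw [if_neg hXZ, if_neg hZY]
    split_ifs with hXY
    · have h := tr_add_bound (LS p) (FS q)
      rw [abs_le] at *
      constructor <;> linarith
    · rw [abs_le]
      constructor <;> linarith

/-- free-group level ql -/
def qlF (w : FreeGroup α) : ℤ := qlw w.toWord

theorem toWord_mul_eq (u v : FreeGroup α) :
    (u * v).toWord = reduce (u.toWord ++ v.toWord) := by
  conv_lhs => rw [← mk_toWord (x := u), ← mk_toWord (x := v), mul_mk]
  rw [toWord_mk]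

theorem qlF_mul_bound (u v : FreeGroup α) : |qlF (u * v) - qlF u - qlF v| ≤ 3 := by
  rw [qlF, toWord_mul_eq]
  exact qlw_defect (reduced_toWord u) (reduced_toWord v)

theorem qlF_inv (u : FreeGroup α) : qlF u⁻¹ = -qlF u := by
  rw [qlF, toWord_inv, qlw_invRev]; rfl

theorem qlF_quad (a b c d : FreeGroup α) :
    |qlF (a * b * c * d) - (qlF a + qlF b + qlF c + qlF d)| ≤ 9 := by
  have h1 := qlF_mul_bound (a * b * c) d
  have h2 := qlF_mul_bound (a * b) c
  have h3 := qlF_mul_bound a b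
  rw [abs_le] at *
  constructor <;> linarith

end WP
end Part4

theorem wreathAction_apply {H K : Type*} [Group H] [Group K] (k : K) (f : K → H) (x : K) :
    wreathAction H K k f x = f (k⁻¹ * x) := rfl

theorem wreath_left_comm {H K : Type*} [Group H] [Group K]
    (g h : WreathProduct H K) (x : K) :
    (g⁻¹ * h⁻¹ * g * h).left x =
      (g.left (g.right * x))⁻¹ * (h.left (h.right * (g.right * x)))⁻¹ *
        g.left (h.right * (g.right * x)) * h.left (g.right⁻¹ * (h.right * (g.right * x))) := by
  simp only [SemidirectProduct.mul_left, SemidirectProduct.inv_left,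
    SemidirectProduct.mul_right, SemidirectProduct.inv_right, Pi.mul_apply, Pi.inv_apply]
  simp only [wreathAction_apply, Pi.inv_apply, mul_inv_rev, inv_inv, mul_assoc]

/-- For all `g, h ∈ Fₙ ≀ K`: `|Δ([g,h])| ≤ 15l`, where `[g,h] = g⁻¹h⁻¹gh` and `l = |K|`. -/
theorem delta_commutator (n : ℕ) (hn : 2 ≤ n) (K : Type*) [Group K] [Fintype K]
    (g h : WreathProduct (FreeGroup (Fin n)) K) :
    |Δ (g⁻¹ * h⁻¹ * g * h)| ≤ 15 * (Fintype.card K : ℤ) := by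
  have hql : ∀ w : FreeGroup (Fin n), ql w = WP.qlF w := fun w => rfl
  set w := g⁻¹ * h⁻¹ * g * h with hw
  set T : K → ℤ := fun x =>
    WP.qlF ((g.left (g.right * x))⁻¹) + WP.qlF ((h.left (h.right * (g.right * x)))⁻¹) +
      WP.qlF (g.left (h.right * (g.right * x))) +
      WP.qlF (h.left (g.right⁻¹ * (h.right * (g.right * x)))) with hTdef
  have key : ∀ x : K, |ql (w.left x) - T x| ≤ 9 := by
    intro x
    rw [hql, hw, wreath_left_comm, hTdef]
    exact WP.qlF_quad _ _ _ _
  have e1 : ∑ x : K, WP.qlF ((g.left (g.right * x))⁻¹) = -∑ x : K, WP.qlF (g.left x) := by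
    calc ∑ x : K, WP.qlF ((g.left (g.right * x))⁻¹)
        = ∑ x : K, -WP.qlF (g.left (g.right * x)) := by
          refine Finset.sum_congr rfl fun x _ => WP.qlF_inv _
      _ = -∑ x : K, WP.qlF (g.left (g.right * x)) := by rw [Finset.sum_neg_distrib]
      _ = -∑ x : K, WP.qlF (g.left x) := by
          rw [Fintype.sum_equiv (Equiv.mulLeft g.right)
            (fun x => WP.qlF (g.left (g.right * x))) (fun x => WP.qlF (g.left x))
            (fun x => rfl)]
  have e2 : ∑ x : K, WP.qlF ((h.left (h.right * (g.right * x)))⁻¹)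
      = -∑ x : K, WP.qlF (h.left x) := by
    calc ∑ x : K, WP.qlF ((h.left (h.right * (g.right * x)))⁻¹)
        = ∑ x : K, -WP.qlF (h.left (h.right * (g.right * x))) := by
          refine Finset.sum_congr rfl fun x _ => WP.qlF_inv _
      _ = -∑ x : K, WP.qlF (h.left (h.right * (g.right * x))) := by
          rw [Finset.sum_neg_distrib]
      _ = -∑ x : K, WP.qlF (h.left x) := by
          rw [Fintype.sum_equiv ((Equiv.mulLeft g.right).trans (Equiv.mulLeft h.right))
            (fun x => WP.qlF (h.left (h.right * (g.right * x))))
            (fun x => WP.qlF (h.left x)) (fun x => rfl)]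
  have e3 : ∑ x : K, WP.qlF (g.left (h.right * (g.right * x)))
      = ∑ x : K, WP.qlF (g.left x) := by
    rw [Fintype.sum_equiv ((Equiv.mulLeft g.right).trans (Equiv.mulLeft h.right))
      (fun x => WP.qlF (g.left (h.right * (g.right * x))))
      (fun x => WP.qlF (g.left x)) (fun x => rfl)]
  have e4 : ∑ x : K, WP.qlF (h.left (g.right⁻¹ * (h.right * (g.right * x))))
      = ∑ x : K, WP.qlF (h.left x) := by
    rw [Fintype.sum_equiv
      (((Equiv.mulLeft g.right).trans (Equiv.mulLeft h.right)).trans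
        (Equiv.mulLeft g.right⁻¹))
      (fun x => WP.qlF (h.left (g.right⁻¹ * (h.right * (g.right * x)))))
      (fun x => WP.qlF (h.left x)) (fun x => rfl)]
  have hT : ∑ x : K, T x = 0 := by
    rw [hTdef]
    simp only [Finset.sum_add_distrib]
    rw [e1, e2, e3, e4]
    ring
  have hΔ : Δ w = ∑ x : K, ql (w.left x) := rfl
  calc |Δ w| = |∑ x : K, (ql (w.left x) - T x)| := by
        rw [Finset.sum_sub_distrib, hT, sub_zero, hΔ]
    _ ≤ ∑ x : K, |ql (w.left x) - T x| := Finset.abs_sum_le_sum_abs _ _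
    _ ≤ ∑ _x : K, (9 : ℤ) := Finset.sum_le_sum fun x _ => key x
    _ = 9 * (Fintype.card K : ℤ) := by
        rw [Finset.sum_const, Finset.card_univ, nsmul_eq_mul]; ring
    _ ≤ 15 * (Fintype.card K : ℤ) := by
        have h0 : (0 : ℤ) ≤ (Fintype.card K : ℤ) := Int.natCast_nonneg _
        nlinarith
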